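/- arXiv:2506.21740 — 3 statements merged into one kernel-verified Lean document; each statement's English description precedes it below -/
import Mathlib

section
/- Let v be any price schedule with payoff u, and let i_0 < i_1 < i_2 < ⋯ be the indices i with μ(X_i) > 0. Then for every k: (1) the closure of X_{i_k} intersects ([0,1]×{0}) ∪ ({1}×[0,1]); and (2) the closure of X_{i_{k+1}} intersected with the closure of X_{i_k} intersected with ([0,1]×{0}) ∪ ({1}×[0,1]) is nonempty. -/
open MeasureTheory Set Filter
open scoped ENNReal

noncomputable section

/-- Dot product on `ℝ × ℝ`. -/
def dot (a b : ℝ × ℝ) : ℝ := a.1 * b.1 + a.2 * b.2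

/-- The square of consumer types `X = (0,1)²`. -/
def Xsq : Set (ℝ × ℝ) := Ioo (0:ℝ) 1 ×ˢ Ioo (0:ℝ) 1

/-- The point `z_i = (y_i, F(y_i))` on the curve of goods. -/
def zpt (y : ℕ → ℝ) (F : ℝ → ℝ) (i : ℕ) : ℝ × ℝ := (y i, F (y i))

/-- The region of consumers strictly preferring good `i` under prices `v`. -/
def region (N : ℕ) (y : ℕ → ℝ) (F : ℝ → ℝ) (v : ℕ → ℝ) (i : ℕ) : Set (ℝ × ℝ) :=
  {x ∈ Xsq | ∀ j ≤ N, j ≠ i → dot x (zpt y F j) - v j < dot x (zpt y F i) - v i}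

/-- Payoff (indirect utility) of a price schedule `v`. -/
def payoff (N : ℕ) (y : ℕ → ℝ) (F : ℝ → ℝ) (v : ℕ → ℝ) (x : ℝ × ℝ) : ℝ :=
  Finset.sup' (Finset.range (N + 1)) (by simp) (fun i => dot x (zpt y F i) - v i)

/-- The monopolist's profit from price schedule `v`. -/
def profit (μ : Measure (ℝ × ℝ)) (N : ℕ) (y : ℕ → ℝ) (F : ℝ → ℝ) (c : ℝ × ℝ → ℝ)
    (v : ℕ → ℝ) : ℝ :=
  ∑ i ∈ Finset.range (N + 1), (v i - c (zpt y F i)) * (μ (region N y F v i)).toReal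

/-- Optimality of a price schedule for the semi-discrete monopolist's problem. -/
def IsOptimal (μ : Measure (ℝ × ℝ)) (N : ℕ) (y : ℕ → ℝ) (F : ℝ → ℝ) (c : ℝ × ℝ → ℝ)
    (v : ℕ → ℝ) : Prop :=
  v 0 = 0 ∧ ∀ v' : ℕ → ℝ, v' 0 = 0 → profit μ N y F c v' ≤ profit μ N y F c v

/-- Discrete sublevel set `X_≤^N(y_i, k)`. -/
def Xle (y : ℕ → ℝ) (F : ℝ → ℝ) (i : ℕ) (k : ℝ) : Set (ℝ × ℝ) :=
  {x ∈ Xsq | dot x (zpt y F (i+1) - zpt y F i) ≤ k}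

/-- Discrete strict sublevel set `X_<^N(y_i, k)`. -/
def Xlt (y : ℕ → ℝ) (F : ℝ → ℝ) (i : ℕ) (k : ℝ) : Set (ℝ × ℝ) :=
  {x ∈ Xsq | dot x (zpt y F (i+1) - zpt y F i) < k}

/-- Discrete level set `X_=^N(y_i, k)`. -/
def Xeq (y : ℕ → ℝ) (F : ℝ → ℝ) (i : ℕ) (k : ℝ) : Set (ℝ × ℝ) :=
  {x ∈ Xsq | dot x (zpt y F (i+1) - zpt y F i) = k}

/-- Hypothesis (H1): `c` is more convex than `F` along the grid. -/
def H1 (N : ℕ) (y : ℕ → ℝ) (F : ℝ → ℝ) (c : ℝ × ℝ → ℝ) : Prop :=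
  ∀ k i j : ℕ, k < i → i < j → j ≤ N →
    (c (zpt y F i) - c (zpt y F k)) / (F (y i) - F (y k)) <
      (c (zpt y F j) - c (zpt y F i)) / (F (y j) - F (y i))

/-- Hypothesis (H2). -/
def H2 (N : ℕ) (y : ℕ → ℝ) (F : ℝ → ℝ) (c : ℝ × ℝ → ℝ) (α fsup f1sup : ℝ) : Prop :=
  ∀ i : ℕ, 0 < i → i < N →
    ((3/2) * fsup + (f1sup / 2) *
        (1 + (F (y (i+1)) - F (y i)) / (y (i+1) - y i)
           + (c (zpt y F (i+1)) - c (zpt y F i)) / (y (i+1) - y i))) / α <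
      ((c (zpt y F (i+1)) - c (zpt y F i)) / (y (i+1) - y i)
          - (c (zpt y F i) - c (zpt y F (i-1))) / (y i - y (i-1))) /
        ((F (y (i+1)) - F (y i)) / (y (i+1) - y i)
          - (F (y i) - F (y (i-1))) / (y i - y (i-1)))

/-- Hypothesis (H3). -/
def H3 (N : ℕ) (y : ℕ → ℝ) (F : ℝ → ℝ) (c : ℝ × ℝ → ℝ) (α fsup f2sup : ℝ) : Prop :=
  ∀ i : ℕ, 0 < i → i < N →
    (F (y (i+1)) - F (y i)) / (y (i+1) - y i) <
      2 * α / (fsup * (2 + ((F (y (i+1)) - F (y i)) / (y (i+1) - y i)) /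
            ((F (y i) - F (y (i-1))) / (y i - y (i-1))))
          + f2sup * (1 + 2 * (y i - y (i-1)) / (F (y i) - F (y (i-1)))
            + (c (zpt y F (i+1)) - c (zpt y F i)) / (F (y (i+1)) - F (y i))))
        * (1 + ((c (zpt y F (i+1)) - c (zpt y F i)) / (F (y (i+1)) - F (y i))
              - (c (zpt y F i) - c (zpt y F (i-1))) / (F (y i) - F (y (i-1)))) /
            ((y i - y (i-1)) / (F (y i) - F (y (i-1)))
              - (y (i+1) - y i) / (F (y (i+1)) - F (y i))))

/-- The bottom and right-hand part of the boundary of the square: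
`([0,1]×{0}) ∪ ({1}×[0,1])`. -/
def botRight : Set (ℝ × ℝ) :=
  (Icc (0:ℝ) 1 ×ˢ ({0} : Set ℝ)) ∪ (({1} : Set ℝ) ×ˢ Icc (0:ℝ) 1)
section AuxHelpers

open scoped Topology

/-- Path along the bottom and right edges of the square. -/
def gam (t : ℝ) : ℝ × ℝ := (min t 1, max (t - 1) 0)

lemma gam_sum (t : ℝ) : (gam t).1 + (gam t).2 = t := by
  unfold gam
  rcases le_total t 1 with h | h
  · rw [min_eq_left h, max_eq_right (by linarith : t - 1 ≤ 0)]; ring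
  · rw [min_eq_right h, max_eq_left (by linarith : (0:ℝ) ≤ t - 1)]; ring

lemma gam_mono1 {t t' : ℝ} (h : t ≤ t') : (gam t).1 ≤ (gam t').1 :=
  min_le_min h le_rfl

lemma gam_mono2 {t t' : ℝ} (h : t ≤ t') : (gam t).2 ≤ (gam t').2 :=
  max_le_max (by linarith) le_rfl

lemma gam_mem1 {t : ℝ} (h0 : 0 ≤ t) : (gam t).1 ∈ Icc (0:ℝ) 1 :=
  ⟨le_min h0 zero_le_one, min_le_right _ _⟩

lemma gam_mem2 {t : ℝ} (h2 : t ≤ 2) : (gam t).2 ∈ Icc (0:ℝ) 1 :=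
  ⟨le_max_right _ _, max_le (by linarith) zero_le_one⟩

lemma gam_botRight {t : ℝ} (h0 : 0 ≤ t) (h2 : t ≤ 2) : gam t ∈ botRight := by
  unfold botRight gam
  rcases le_total t 1 with h | h
  · exact Or.inl (Set.mem_prod.2 ⟨⟨le_min h0 zero_le_one, min_le_right _ _⟩,
      by simp [max_eq_right (by linarith : t - 1 ≤ (0:ℝ))]⟩)
  · exact Or.inr (Set.mem_prod.2 ⟨by simp [min_eq_right h],
      ⟨le_max_right _ _, max_le (by linarith) zero_le_one⟩⟩)

lemma continuous_dot (z : ℝ × ℝ) : Continuous fun x : ℝ × ℝ => dot x z := by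
  unfold dot; fun_prop

lemma continuous_gam : Continuous gam := by
  unfold gam
  exact (continuous_id.min continuous_const).prodMk
    ((continuous_id.sub continuous_const).max continuous_const)

lemma dot_sub (x p q : ℝ × ℝ) : dot x (p - q) = dot x p - dot x q := by
  unfold dot; simp [Prod.fst_sub, Prod.snd_sub]; ring

lemma yMono {N : ℕ} {y : ℕ → ℝ} (hyinc : ∀ i < N, y i < y (i+1)) :
    ∀ l ≤ N, ∀ k, k < l → y k < y l := by
  intro l hl
  induction l with
  | zero => intro k hk; omega
  | succ n ih =>
    intro k hk
    have hn : y n < y (n + 1) := hyinc n (by omega)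
    rcases Nat.lt_succ_iff_lt_or_eq.1 hk with h | h
    · exact (ih (by omega) k h).trans hn
    · subst h; exact hn

lemma yMem {N : ℕ} {y : ℕ → ℝ} {ty : ℝ} (hy0 : y 0 = 0)
    (hyinc : ∀ i < N, y i < y (i+1)) (hyN : y N ≤ ty) :
    ∀ k ≤ N, y k ∈ Icc (0:ℝ) ty := by
  intro k hk
  constructor
  · rcases Nat.eq_zero_or_pos k with h | h
    · subst h; exact le_of_eq hy0.symm
    · have := yMono hyinc k hk 0 h; linarith [this, hy0.ge]
  · rcases eq_or_lt_of_le hk with h | h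
    · subst h; exact hyN
    · exact le_of_lt (lt_of_lt_of_le (yMono hyinc N le_rfl k h) hyN)

lemma isOpen_Xsq : IsOpen Xsq := isOpen_Ioo.prod isOpen_Ioo

lemma region_subset_Xsq (N : ℕ) (y : ℕ → ℝ) (F : ℝ → ℝ) (v : ℕ → ℝ) (i : ℕ) :
    region N y F v i ⊆ Xsq := fun _ hx => hx.1

lemma isOpen_strictSet (N : ℕ) (y : ℕ → ℝ) (F : ℝ → ℝ) (v : ℕ → ℝ) (k : ℕ) :
    IsOpen {x : ℝ × ℝ | ∀ m ≤ N, m ≠ k →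
      dot x (zpt y F m) - v m < dot x (zpt y F k) - v k} := by
  have : {x : ℝ × ℝ | ∀ m ≤ N, m ≠ k →
      dot x (zpt y F m) - v m < dot x (zpt y F k) - v k} =
      ⋂ m ∈ Finset.range (N+1), {x : ℝ × ℝ | m ≠ k →
        dot x (zpt y F m) - v m < dot x (zpt y F k) - v k} := by
    ext x
    simp [Set.mem_iInter, Finset.mem_range, Nat.lt_succ_iff]
  rw [this]
  refine isOpen_biInter_finset fun m _ => ?_
  by_cases hm : m = k
  · have : {x : ℝ × ℝ | m ≠ k →
        dot x (zpt y F m) - v m < dot x (zpt y F k) - v k} = Set.univ := by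
      ext x; simp [hm]
    rw [this]; exact isOpen_univ
  · have : {x : ℝ × ℝ | m ≠ k →
        dot x (zpt y F m) - v m < dot x (zpt y F k) - v k} =
        {x : ℝ × ℝ | dot x (zpt y F m) - v m < dot x (zpt y F k) - v k} := by
      ext x; simp [hm]
    rw [this]
    exact isOpen_lt ((continuous_dot _).sub continuous_const)
      ((continuous_dot _).sub continuous_const)

lemma isOpen_region (N : ℕ) (y : ℕ → ℝ) (F : ℝ → ℝ) (v : ℕ → ℝ) (i : ℕ) :
    IsOpen (region N y F v i) := by
  have : region N y F v i = Xsq ∩ {x : ℝ × ℝ | ∀ m ≤ N, m ≠ i →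
      dot x (zpt y F m) - v m < dot x (zpt y F i) - v i} := rfl
  rw [this]
  exact isOpen_Xsq.inter (isOpen_strictSet N y F v i)

lemma mu_pos_of_open_nonempty {f : ℝ × ℝ → ℝ} {μ : Measure (ℝ × ℝ)} {α : ℝ}
    (hμ : μ = (volume.restrict Xsq).withDensity fun x => ENNReal.ofReal (f x))
    (hα : 0 < α) (hfl : ∀ x ∈ Xsq, α ≤ f x)
    {S : Set (ℝ × ℝ)} (hSo : IsOpen S) (hSs : S ⊆ Xsq) (hne : S.Nonempty) :
    0 < μ S := by
  have hSm : MeasurableSet S := hSo.measurableSet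
  rw [hμ, withDensity_apply _ hSm, Measure.restrict_restrict hSm,
    Set.inter_eq_self_of_subset_left hSs]
  have h1 : ENNReal.ofReal α * volume S ≤ ∫⁻ x in S, ENNReal.ofReal (f x) ∂volume := by
    rw [← setLIntegral_const]
    exact setLIntegral_mono' hSm fun x hx => ENNReal.ofReal_le_ofReal (hfl x (hSs hx))
  refine lt_of_lt_of_le ?_ h1
  exact ENNReal.mul_pos (ENNReal.ofReal_pos.2 hα).ne' (hSo.measure_pos volume hne).ne'

lemma mem_closure_region {N : ℕ} {y : ℕ → ℝ} {F : ℝ → ℝ} {v : ℕ → ℝ} {i : ℕ}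
    {a : ℝ × ℝ} (ha : a ∈ region N y F v i) {w : ℝ × ℝ}
    (hw1 : w.1 ∈ Icc (0:ℝ) 1) (hw2 : w.2 ∈ Icc (0:ℝ) 1)
    (hwle : ∀ l ≤ N, l ≠ i → dot w (zpt y F l) - v l ≤ dot w (zpt y F i) - v i) :
    w ∈ closure (region N y F v i) := by
  have haX := ha.1
  simp only [Xsq, Set.mem_prod, Set.mem_Ioo] at haX
  obtain ⟨⟨ha1, ha1'⟩, ha2, ha2'⟩ := haX
  set u : ℕ → ℝ := fun n => 1 - 1 / (n + 1) with hu_def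
  have hu : ∀ n : ℕ, 0 ≤ u n ∧ u n < 1 := by
    intro n
    have h1 : (0:ℝ) < (n:ℝ) + 1 := by positivity
    have h2 : 1 / ((n:ℝ) + 1) ≤ 1 := by
      rw [div_le_one h1]; linarith [Nat.cast_nonneg (α := ℝ) n]
    have h3 : 0 < 1 / ((n:ℝ) + 1) := by positivity
    constructor <;> simp only [hu_def] <;> [linarith; linarith]
  refine mem_closure_iff_seq_limit.2 ⟨fun n =>
    ((1 - u n) * a.1 + u n * w.1, (1 - u n) * a.2 + u n * w.2), fun n => ?_, ?_⟩
  · obtain ⟨hun, hun'⟩ := hu n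
    constructor
    · constructor
      · simp only [Set.mem_Ioo]
        constructor
        · nlinarith [hw1.1]
        · nlinarith [hw1.2]
      · simp only [Set.mem_Ioo]
        constructor
        · nlinarith [hw2.1]
        · nlinarith [hw2.2]
    · intro l hl hli
      have h1 := ha.2 l hl hli
      have h2 := hwle l hl hli
      unfold dot zpt at h1 h2 ⊢
      simp only at h1 h2 ⊢
      nlinarith [mul_le_mul_of_nonneg_left h2 hun,
        mul_lt_mul_of_pos_left h1 (by linarith : (0:ℝ) < 1 - u n)]
  · have hulim : Tendsto u atTop (𝓝 1) := by
      have h0 : Tendsto (fun n : ℕ => 1 / ((n:ℝ) + 1)) atTop (𝓝 0) :=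
        tendsto_one_div_add_atTop_nhds_zero_nat
      have hone : Tendsto (fun _ : ℕ => (1:ℝ)) atTop (𝓝 1) := tendsto_const_nhds
      simpa [hu_def, one_div] using hone.sub h0
    have hcoord : ∀ (aa ww : ℝ), Tendsto (fun n => (1 - u n) * aa + u n * ww) atTop (𝓝 ww) := by
      intro aa ww
      have hone : Tendsto (fun _ : ℕ => (1:ℝ)) atTop (𝓝 1) := tendsto_const_nhds
      have haa : Tendsto (fun _ : ℕ => aa) atTop (𝓝 aa) := tendsto_const_nhds
      have hww : Tendsto (fun _ : ℕ => ww) atTop (𝓝 ww) := tendsto_const_nhds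
      have := ((hone.sub hulim).mul haa).add (hulim.mul hww)
      simpa using this
    have := (hcoord a.1 w.1).prodMk_nhds (hcoord a.2 w.2)
    simpa using this

lemma dot_gam_strictMono {w : ℝ × ℝ} (hw1 : 0 < w.1) (hw2 : 0 < w.2) :
    StrictMono fun t => dot (gam t) w := by
  intro t t' h
  have d1 : (gam t).1 ≤ (gam t').1 := gam_mono1 h.le
  have d2 : (gam t).2 ≤ (gam t').2 := gam_mono2 h.le
  have hs : (gam t).1 + (gam t).2 = t := gam_sum t
  have hs' : (gam t').1 + (gam t').2 = t' := gam_sum t'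
  simp only [dot]
  rcases lt_or_ge (gam t).1 (gam t').1 with hd | hd
  · nlinarith
  · have h1 : (gam t).1 = (gam t').1 := le_antisymm d1 hd
    have h2 : (gam t).2 < (gam t').2 := by linarith
    nlinarith

lemma mono_best {N : ℕ} {y : ℕ → ℝ} {F : ℝ → ℝ} {v : ℕ → ℝ} {ty : ℝ}
    (hy0 : y 0 = 0) (hyinc : ∀ i < N, y i < y (i+1)) (hyN : y N ≤ ty)
    (hFmono : StrictMonoOn F (Icc 0 ty))
    {t t' : ℝ} (h : t < t') {k l : ℕ} (hk : k ≤ N) (hl : l ≤ N)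
    (hQk : ∀ m ≤ N, dot (gam t) (zpt y F m) - v m ≤ dot (gam t) (zpt y F k) - v k)
    (hQl : ∀ m ≤ N, dot (gam t') (zpt y F m) - v m ≤ dot (gam t') (zpt y F l) - v l) :
    k ≤ l := by
  by_contra hkl
  push_neg at hkl
  have hy : y l < y k := yMono hyinc k hk l hkl
  have hF : F (y l) < F (y k) :=
    hFmono (yMem hy0 hyinc hyN l hl) (yMem hy0 hyinc hyN k hk) hy
  have h1 := hQk l hl
  have h2 := hQl k hk
  have d1 : (gam t).1 ≤ (gam t').1 := gam_mono1 h.le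
  have d2 : (gam t).2 ≤ (gam t').2 := gam_mono2 h.le
  have hs : (gam t).1 + (gam t).2 = t := gam_sum t
  have hs' : (gam t').1 + (gam t').2 = t' := gam_sum t'
  unfold dot zpt at h1 h2
  simp only at h1 h2
  have e1 : ((gam t').1 - (gam t).1) * (y k - y l) ≥ 0 :=
    mul_nonneg (by linarith) (by linarith)
  have e2 : ((gam t').2 - (gam t).2) * (F (y k) - F (y l)) ≥ 0 :=
    mul_nonneg (by linarith) (by linarith)
  have key : ((gam t').1 - (gam t).1) * (y k - y l)
      + ((gam t').2 - (gam t).2) * (F (y k) - F (y l)) ≤ 0 := by nlinarith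
  have hz1 : ((gam t').1 - (gam t).1) * (y k - y l) = 0 := by linarith
  have hz2 : ((gam t').2 - (gam t).2) * (F (y k) - F (y l)) = 0 := by linarith
  have hg1 : (gam t').1 - (gam t).1 = 0 := by
    rcases mul_eq_zero.1 hz1 with h' | h'
    · exact h'
    · linarith
  have hg2 : (gam t').2 - (gam t).2 = 0 := by
    rcases mul_eq_zero.1 hz2 with h' | h'
    · exact h'
    · linarith
  linarith

end AuxHelpers
section AuxHelpers2

lemma exit_lemma {N : ℕ} {y : ℕ → ℝ} {F : ℝ → ℝ} {v : ℕ → ℝ} {ty : ℝ}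
    (hF0 : F 0 = 0) (hFmono : StrictMonoOn F (Icc 0 ty)) (hFconv : ConvexOn ℝ (Icc 0 ty) F)
    (hy0 : y 0 = 0) (hyinc : ∀ i < N, y i < y (i+1)) (hyN : y N ≤ ty)
    {i : ℕ} (hi : i ≤ N) {a : ℝ × ℝ} (ha : a ∈ region N y F v i) :
    ∃ t, 0 ≤ t ∧ t ≤ 2 ∧
      ∀ l ≤ N, l ≠ i → dot (gam t) (zpt y F l) - v l ≤ dot (gam t) (zpt y F i) - v i := by
  have hmem := yMem hy0 hyinc hyN
  set s : ℝ := if i = 0 then 0 else (F (y i) - F (y (i-1))) / (y i - y (i-1)) with hs_def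
  have hs0 : 0 ≤ s := by
    rcases eq_or_ne i 0 with h | h
    · simp [hs_def, h]
    · have hi1 : i - 1 < i := by omega
      have hyi : y (i-1) < y i := yMono hyinc i hi (i-1) hi1
      have hFi : F (y (i-1)) < F (y i) :=
        hFmono (hmem (i-1) (by omega)) (hmem i hi) hyi
      rw [hs_def, if_neg h]
      exact le_of_lt (div_pos (by linarith) (by linarith))
  have key : ∀ l ≤ N, l ≠ i → s * (y l - y i) ≤ F (y l) - F (y i) := by
    intro l hl hli
    rcases eq_or_ne i 0 with h | h
    · subst h
      have hyl : y 0 < y l := yMono hyinc l hl 0 (Nat.pos_of_ne_zero hli)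
      have hFl : F (y 0) < F (y l) :=
        hFmono (hmem 0 (by omega)) (hmem l hl) hyl
      simp [hs_def]
      linarith
    · have hi1 : i - 1 < i := by omega
      have hyi : y (i-1) < y i := yMono hyinc i hi (i-1) hi1
      have hs_eq : s = (F (y i) - F (y (i-1))) / (y i - y (i-1)) := by
        rw [hs_def, if_neg h]
      rcases lt_or_gt_of_ne hli with hlt | hgt
      · -- l < i
        have hyl : y l < y i := yMono hyinc i hi l hlt
        have hle : y l ≤ y (i-1) := by
          rcases eq_or_ne l (i-1) with h' | h'
          · rw [h']
          · exact le_of_lt (yMono hyinc (i-1) (by omega) l (by omega))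
        have hsl := hFconv.secant_mono (hmem i hi) (hmem l hl) (hmem (i-1) (by omega))
          (by linarith : y l ≠ y i) (by linarith : y (i-1) ≠ y i) hle
        have heq : (F (y (i-1)) - F (y i)) / (y (i-1) - y i) = s := by
          rw [hs_eq, ← neg_div_neg_eq, neg_sub, neg_sub]
        rw [heq] at hsl
        have := (div_le_iff_of_neg (by linarith : y l - y i < 0)).1 hsl
        linarith
      · -- i < l
        have hyl : y i < y l := yMono hyinc l hl i hgt
        have hsl := hFconv.secant_mono (hmem i hi) (hmem (i-1) (by omega)) (hmem l hl)
          (by linarith : y (i-1) ≠ y i) (by linarith : y l ≠ y i) (by linarith : y (i-1) ≤ y l)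
        have heq : (F (y (i-1)) - F (y i)) / (y (i-1) - y i) = s := by
          rw [hs_eq, ← neg_div_neg_eq, neg_sub, neg_sub]
        rw [heq] at hsl
        have := (le_div_iff₀ (by linarith : (0:ℝ) < y l - y i)).1 hsl
        linarith
  have haX := ha.1
  simp only [Xsq, Set.mem_prod, Set.mem_Ioo] at haX
  obtain ⟨⟨ha1, ha1'⟩, ha2, ha2'⟩ := haX
  by_cases hcase : s * a.2 ≤ 1 - a.1
  · -- exit through the bottom edge
    refine ⟨a.1 + s * a.2, by nlinarith, by nlinarith, ?_⟩
    have ht1 : a.1 + s * a.2 ≤ 1 := by linarith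
    have hg : gam (a.1 + s * a.2) = (a.1 + s * a.2, 0) := by
      unfold gam
      rw [min_eq_left ht1, max_eq_right (by linarith : a.1 + s * a.2 - 1 ≤ 0)]
    rw [hg]
    intro l hl hli
    have h1 := ha.2 l hl hli
    have h2 := key l hl hli
    unfold dot zpt at h1 ⊢
    simp only at h1 ⊢
    nlinarith [mul_le_mul_of_nonneg_left h2 ha2.le]
  · -- exit through the right edge
    push_neg at hcase
    have hspos : 0 < s := by nlinarith
    set r : ℝ := (1 - a.1) / s with hr_def
    have hr0 : 0 < r := div_pos (by linarith) hspos
    have hrs : r * s = 1 - a.1 := by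
      rw [hr_def]; field_simp
    have hra : r < a.2 := by
      rw [hr_def, div_lt_iff₀ hspos]; nlinarith
    refine ⟨1 + (a.2 - r), by linarith, by linarith, ?_⟩
    have hg : gam (1 + (a.2 - r)) = (1, a.2 - r) := by
      unfold gam
      rw [min_eq_right (by linarith : (1:ℝ) ≤ 1 + (a.2 - r)),
        max_eq_left (by linarith : (0:ℝ) ≤ 1 + (a.2 - r) - 1)]
      simp
    rw [hg]
    intro l hl hli
    have h1 := ha.2 l hl hli
    have h2 := key l hl hli
    unfold dot zpt at h1 ⊢
    simp only at h1 ⊢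
    have he1 : (1:ℝ) = a.1 + r * s := by linarith
    rw [he1]
    nlinarith [mul_le_mul_of_nonneg_left h2 hr0.le]

lemma tie_subsingleton {N : ℕ} {y : ℕ → ℝ} {F : ℝ → ℝ} {v : ℕ → ℝ} {ty : ℝ}
    (hy0 : y 0 = 0) (hyinc : ∀ i < N, y i < y (i+1)) (hyN : y N ≤ ty)
    (hFmono : StrictMonoOn F (Icc 0 ty))
    {k l : ℕ} (hk : k ≤ N) (hl : l ≤ N) (hlk : l < k) :
    Set.Subsingleton {t : ℝ | dot (gam t) (zpt y F k) - v k = dot (gam t) (zpt y F l) - v l} := by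
  intro t ht t' ht'
  simp only [Set.mem_setOf_eq] at ht ht'
  have hy : y l < y k := yMono hyinc k hk l hlk
  have hF : F (y l) < F (y k) :=
    hFmono (yMem hy0 hyinc hyN l hl) (yMem hy0 hyinc hyN k hk) hy
  have hsm : StrictMono fun t => dot (gam t) (zpt y F k - zpt y F l) := by
    apply dot_gam_strictMono
    · simpa [zpt, Prod.fst_sub] using by linarith
    · simpa [zpt, Prod.snd_sub] using by linarith
  apply hsm.injective
  simp only [dot_sub]
  linarith

end AuxHelpers2

/-- Lemma `partition`: every purchased good is purchased by consumers
reaching the bottom-right part of the boundary, and consecutive (in the enumeration of goods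
with positive mass) regions share such a boundary point. -/
theorem regions_meet_bottom_right_boundary
    (ty α fsup f1sup f2sup : ℝ) (F : ℝ → ℝ) (c : ℝ × ℝ → ℝ)
    (N : ℕ) (y : ℕ → ℝ) (f : ℝ × ℝ → ℝ) (μ : Measure (ℝ × ℝ))
    (hty : 0 < ty) (hα : 0 < α)
    (hF0 : F 0 = 0) (hFmono : StrictMonoOn F (Icc 0 ty)) (hFconv : ConvexOn ℝ (Icc 0 ty) F)
    (hy0 : y 0 = 0) (hyinc : ∀ i < N, y i < y (i+1)) (hyN : y N ≤ ty)
    (hc0 : c (0, 0) = 0)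
    (hcmono : StrictMonoOn (fun s => c (s, F s)) (Icc 0 ty))
    (hcconv : ConvexOn ℝ (Icc 0 ty) (fun s => c (s, F s)))
    (hμ : μ = (volume.restrict Xsq).withDensity fun x => ENNReal.ofReal (f x))
    (hprob : IsProbabilityMeasure μ)
    (hfl : ∀ x ∈ Xsq, α ≤ f x) (hfu : ∀ x ∈ Xsq, f x ≤ fsup)
    (hfd : ∀ x ∈ Xsq, DifferentiableAt ℝ f x)
    (hf1 : ∀ x ∈ Xsq, |fderiv ℝ f x (1, 0)| ≤ f1sup)
    (hf2 : ∀ x ∈ Xsq, |fderiv ℝ f x (0, 1)| ≤ f2sup)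
    (v : ℕ → ℝ) (hv0 : v 0 = 0) :
    (∀ i ≤ N, 0 < μ (region N y F v i) →
      (closure (region N y F v i) ∩ botRight).Nonempty) ∧
    (∀ i j : ℕ, i < j → j ≤ N →
      0 < μ (region N y F v i) → 0 < μ (region N y F v j) →
      (∀ p : ℕ, i < p → p < j → μ (region N y F v p) = 0) →
      (closure (region N y F v j) ∩ closure (region N y F v i) ∩ botRight).Nonempty) := by
  have hclosXsq : closure Xsq = Icc (0:ℝ) 1 ×ˢ Icc (0:ℝ) 1 := by
    rw [Xsq, closure_prod_eq, closure_Ioo (by norm_num : (0:ℝ) ≠ 1)]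
  have hnonempty : ∀ i, 0 < μ (region N y F v i) → (region N y F v i).Nonempty := by
    intro i hpos
    rw [Set.nonempty_iff_ne_empty]
    intro h
    rw [h] at hpos
    simp at hpos
  have part1 : ∀ i ≤ N, 0 < μ (region N y F v i) →
      (closure (region N y F v i) ∩ botRight).Nonempty := by
    intro i hi hpos
    obtain ⟨a, ha⟩ := hnonempty i hpos
    obtain ⟨t, ht0, ht2, hQ⟩ := exit_lemma hF0 hFmono hFconv hy0 hyinc hyN hi ha
    exact ⟨gam t, mem_closure_region ha (gam_mem1 ht0) (gam_mem2 ht2) hQ,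
      gam_botRight ht0 ht2⟩
  refine ⟨part1, ?_⟩
  intro i j hij hj hpi hpj hzero
  have hi : i ≤ N := by omega
  obtain ⟨a, ha⟩ := hnonempty i hpi
  obtain ⟨b, hb⟩ := hnonempty j hpj
  obtain ⟨ti, hti0, hti2, hQi'⟩ := exit_lemma hF0 hFmono hFconv hy0 hyinc hyN hi ha
  obtain ⟨tj, htj0, htj2, hQj'⟩ := exit_lemma hF0 hFmono hFconv hy0 hyinc hyN hj hb
  have hQi : ∀ m ≤ N, dot (gam ti) (zpt y F m) - v m ≤ dot (gam ti) (zpt y F i) - v i := by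
    intro m hm
    rcases eq_or_ne m i with h | h
    · subst h; exact le_rfl
    · exact hQi' m hm h
  have hQj : ∀ m ≤ N, dot (gam tj) (zpt y F m) - v m ≤ dot (gam tj) (zpt y F j) - v j := by
    intro m hm
    rcases eq_or_ne m j with h | h
    · subst h; exact le_rfl
    · exact hQj' m hm h
  have finish : ∀ t, 0 ≤ t → t ≤ 2 →
      (∀ m ≤ N, dot (gam t) (zpt y F m) - v m ≤ dot (gam t) (zpt y F i) - v i) →
      (∀ m ≤ N, dot (gam t) (zpt y F m) - v m ≤ dot (gam t) (zpt y F j) - v j) →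
      (closure (region N y F v j) ∩ closure (region N y F v i) ∩ botRight).Nonempty := by
    intro t h0 h2 hQit hQjt
    exact ⟨gam t,
      ⟨mem_closure_region hb (gam_mem1 h0) (gam_mem2 h2) (fun l hl _ => hQjt l hl),
       mem_closure_region ha (gam_mem1 h0) (gam_mem2 h2) (fun l hl _ => hQit l hl)⟩,
      gam_botRight h0 h2⟩
  rcases lt_trichotomy ti tj with hlt | heq | hgt
  · -- main case : ti < tj
    set A := {t : ℝ | t ∈ Icc ti tj ∧
      ∀ m ≤ N, dot (gam t) (zpt y F m) - v m ≤ dot (gam t) (zpt y F i) - v i} with hA_def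
    have hQclosed : ∀ k : ℕ, IsClosed {t : ℝ | ∀ m ≤ N,
        dot (gam t) (zpt y F m) - v m ≤ dot (gam t) (zpt y F k) - v k} := by
      intro k
      have : {t : ℝ | ∀ m ≤ N, dot (gam t) (zpt y F m) - v m ≤ dot (gam t) (zpt y F k) - v k}
          = ⋂ m, ⋂ (_ : m ≤ N), {t : ℝ |
            dot (gam t) (zpt y F m) - v m ≤ dot (gam t) (zpt y F k) - v k} := by
        ext t; simp [Set.mem_iInter]
      rw [this]
      exact isClosed_iInter fun m => isClosed_iInter fun _ =>
        isClosed_le (((continuous_dot _).comp continuous_gam).sub continuous_const)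
          (((continuous_dot _).comp continuous_gam).sub continuous_const)
    have hAclosed : IsClosed A := by
      have : A = Icc ti tj ∩ {t : ℝ | ∀ m ≤ N,
          dot (gam t) (zpt y F m) - v m ≤ dot (gam t) (zpt y F i) - v i} := rfl
      rw [this]
      exact isClosed_Icc.inter (hQclosed i)
    have hAne : A.Nonempty := ⟨ti, ⟨le_rfl, hlt.le⟩, hQi⟩
    have hAbdd : BddAbove A := ⟨tj, fun t ht => ht.1.2⟩
    set τ := sSup A with hτ_def
    have hτA : τ ∈ A := hAclosed.csSup_mem hAne hAbdd
    have hτi : ti ≤ τ := le_csSup hAbdd ⟨⟨le_rfl, hlt.le⟩, hQi⟩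
    have hτj : τ ≤ tj := hτA.1.2
    set B := {t : ℝ | t ∈ Icc τ tj ∧
      ∀ m ≤ N, dot (gam t) (zpt y F m) - v m ≤ dot (gam t) (zpt y F j) - v j} with hB_def
    have hBclosed : IsClosed B := by
      have : B = Icc τ tj ∩ {t : ℝ | ∀ m ≤ N,
          dot (gam t) (zpt y F m) - v m ≤ dot (gam t) (zpt y F j) - v j} := rfl
      rw [this]
      exact isClosed_Icc.inter (hQclosed j)
    have hBne : B.Nonempty := ⟨tj, ⟨hτj, le_rfl⟩, hQj⟩
    have hBbdd : BddBelow B := ⟨τ, fun t ht => ht.1.1⟩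
    set σ := sInf B with hσ_def
    have hσB : σ ∈ B := hBclosed.csInf_mem hBne hBbdd
    have hτσ : τ ≤ σ := le_csInf hBne fun t ht => ht.1.1
    have hσtj : σ ≤ tj := hσB.1.2
    rcases eq_or_lt_of_le hτσ with heq | hltτσ
    · have hQjτ : ∀ m ≤ N, dot (gam τ) (zpt y F m) - v m ≤ dot (gam τ) (zpt y F j) - v j := by
        rw [heq]; exact hσB.2
      exact finish τ (le_trans hti0 hτi) (le_trans hτj htj2) hτA.2 hQjτ
    · exfalso
      set bad := ⋃ k ∈ Finset.range (N+1), ⋃ l ∈ Finset.range (N+1),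
        {t : ℝ | k ≠ l ∧ dot (gam t) (zpt y F k) - v k = dot (gam t) (zpt y F l) - v l}
        with hbad_def
      have hbadfin : bad.Finite := by
        refine Set.Finite.biUnion (Finset.range (N+1)).finite_toSet fun k hkmem => ?_
        refine Set.Finite.biUnion (Finset.range (N+1)).finite_toSet fun l hlmem => ?_
        simp only [Finset.mem_coe, Finset.mem_range, Nat.lt_succ_iff] at hkmem hlmem
        rcases eq_or_ne k l with h | h
        · have he : {t : ℝ | k ≠ l ∧
              dot (gam t) (zpt y F k) - v k = dot (gam t) (zpt y F l) - v l} = ∅ := by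
            ext t; simp [h]
          rw [he]; exact Set.finite_empty
        · apply Set.Subsingleton.finite
          intro t ht t' ht'
          rcases lt_or_gt_of_ne h with hlt' | hgt'
          · exact tie_subsingleton hy0 hyinc hyN hFmono hlmem hkmem hlt'
              (ht.2.symm) (ht'.2.symm)
          · exact tie_subsingleton hy0 hyinc hyN hFmono hkmem hlmem hgt' ht.2 ht'.2
      obtain ⟨t, ht⟩ := ((Set.Ioo_infinite hltτσ).diff hbadfin).nonempty
      have htτ : τ < t := ht.1.1
      have htσ : t < σ := ht.1.2
      have ht0 : 0 ≤ t := le_trans hti0 (le_trans hτi htτ.le)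
      have ht2 : t ≤ 2 := le_trans htσ.le (le_trans hσtj htj2)
      obtain ⟨k, hkmem, hkmax⟩ := Finset.exists_max_image (Finset.range (N+1))
        (fun m => dot (gam t) (zpt y F m) - v m) ⟨0, Finset.mem_range.2 (by omega)⟩
      have hk : k ≤ N := Nat.lt_succ_iff.1 (Finset.mem_range.1 hkmem)
      have hQk : ∀ m ≤ N, dot (gam t) (zpt y F m) - v m ≤ dot (gam t) (zpt y F k) - v k :=
        fun m hm => hkmax m (Finset.mem_range.2 (by omega))
      have hstrict : ∀ m ≤ N, m ≠ k →
          dot (gam t) (zpt y F m) - v m < dot (gam t) (zpt y F k) - v k := by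
        intro m hm hmk
        rcases lt_or_eq_of_le (hQk m hm) with h | h
        · exact h
        · exfalso
          apply ht.2
          rw [hbad_def]
          simp only [Set.mem_iUnion, Set.mem_setOf_eq]
          exact ⟨m, Finset.mem_range.2 (by omega), k, hkmem, hmk, h⟩
      have hki : i < k := by
        have hle : i ≤ k := mono_best hy0 hyinc hyN hFmono htτ hi hk hτA.2 hQk
        rcases eq_or_lt_of_le hle with h | h
        · exfalso
          have htA : t ∈ A := ⟨⟨le_trans hτi htτ.le, le_trans htσ.le hσtj⟩, by rw [h]; exact hQk⟩
          have : t ≤ τ := le_csSup hAbdd htA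
          linarith
        · exact h
      have hkj : k < j := by
        have hle : k ≤ j := mono_best hy0 hyinc hyN hFmono htσ hk hj hQk hσB.2
        rcases eq_or_lt_of_le hle with h | h
        · exfalso
          have htB : t ∈ B := ⟨⟨htτ.le, le_trans htσ.le hσtj⟩, by rw [← h]; exact hQk⟩
          have : σ ≤ t := csInf_le hBbdd htB
          linarith
        · exact h
      have hclos : gam t ∈ closure Xsq := by
        rw [hclosXsq]
        exact Set.mem_prod.2 ⟨gam_mem1 ht0, gam_mem2 ht2⟩
      have hmemU : gam t ∈ {x : ℝ × ℝ | ∀ m ≤ N, m ≠ k →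
          dot x (zpt y F m) - v m < dot x (zpt y F k) - v k} := hstrict
      obtain ⟨x, hxU, hxX⟩ := _root_.mem_closure_iff.1 hclos _ (isOpen_strictSet N y F v k) hmemU
      have hxr : x ∈ region N y F v k := ⟨hxX, hxU⟩
      have hposk := mu_pos_of_open_nonempty hμ hα hfl (isOpen_region N y F v k)
        (region_subset_Xsq N y F v k) ⟨x, hxr⟩
      rw [hzero k hki hkj] at hposk
      exact lt_irrefl _ hposk
  · -- ti = tj
    have hQjτ : ∀ m ≤ N, dot (gam ti) (zpt y F m) - v m ≤ dot (gam ti) (zpt y F j) - v j := by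
      rw [heq]; exact hQj
    exact finish ti hti0 hti2 hQi hQjτ
  · -- tj < ti : impossible
    exfalso
    have := mono_best hy0 hyinc hyN hFmono hgt hj hi hQj hQi
    omega
end
end

section
/- Assume hypotheses (H1), (H2) and (H3) and additionally c(z_1) > F(y_1). Let v be an optimal price schedule for the semi-discrete monopolist's problem with data (μ, Y_N, c). Then for each i such that μ(X_i) > 0 and μ(X_{i+1}) > 0, the intersection of the closure of the indifference segment cl(X_i) ∩ cl(X_{i+1}) with ({0}×[0,1]) ∪ ([0,1]×{1}) is contained in [0,1]×{1}; that is, the indifference segments meet the upper-left part of the boundary of X only along the top edge [0,1]×{1}. -/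
open MeasureTheory Set Filter
open scoped ENNReal

noncomputable section

/-- Auxiliary: the grid points are strictly increasing. -/
lemma y_strictmono_aux {N : ℕ} {y : ℕ → ℝ} (hyinc : ∀ i < N, y i < y (i+1)) :
    ∀ a b : ℕ, a < b → b ≤ N → y a < y b := by
  intro a b
  induction b with
  | zero => intro h _; exact absurd h (by omega)
  | succ b ih =>
    intro hab hbN
    rcases Nat.lt_succ_iff_lt_or_eq.mp hab with h | h
    · exact (ih h (by omega)).trans (hyinc b (by omega))
    · subst h; exact hyinc a (by omega)

/-- Auxiliary: the grid points lie in `[0, ty]`. -/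
lemma y_mem_Icc_aux {ty : ℝ} {N : ℕ} {y : ℕ → ℝ} (hy0 : y 0 = 0)
    (hyinc : ∀ i < N, y i < y (i+1)) (hyN : y N ≤ ty) :
    ∀ k, k ≤ N → y k ∈ Icc 0 ty := by
  intro k hkN
  constructor
  · rcases Nat.eq_zero_or_pos k with h | h
    · subst h; simp [hy0]
    · rw [← hy0]; exact (y_strictmono_aux hyinc 0 k h hkN).le
  · rcases Nat.eq_or_lt_of_le hkN with h | h
    · subst h; exact hyN
    · exact (y_strictmono_aux hyinc k N h le_rfl).le.trans hyN

/-- Auxiliary: from (H1) and `F(y₁) < c(z₁)` one gets `F(y_j) < c(z_j)` for `1 ≤ j ≤ N`. -/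
lemma c_gt_F_aux {ty : ℝ} {N : ℕ} {y : ℕ → ℝ} {F : ℝ → ℝ} {c : ℝ × ℝ → ℝ}
    (hF0 : F 0 = 0) (hFmono : StrictMonoOn F (Icc 0 ty))
    (hy0 : y 0 = 0) (hyinc : ∀ i < N, y i < y (i+1)) (hyN : y N ≤ ty)
    (hc0 : c (0, 0) = 0)
    (hH1 : H1 N y F c)
    (hc1 : F (y 1) < c (zpt y F 1)) :
    ∀ j : ℕ, 1 ≤ j → j ≤ N → F (y j) < c (zpt y F j) := by
  have hymem := y_mem_Icc_aux hy0 hyinc hyN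
  have hFy0 : F (y 0) = 0 := by rw [hy0, hF0]
  have hFpos : ∀ k, 1 ≤ k → k ≤ N → 0 < F (y k) := by
    intro k h1 hk
    have := hFmono (hymem 0 (Nat.zero_le N)) (hymem k hk)
      (y_strictmono_aux hyinc 0 k h1 hk)
    rw [hFy0] at this; exact this
  have hc00 : c (zpt y F 0) = 0 := by
    have hz : zpt y F 0 = ((0:ℝ), (0:ℝ)) := by simp [zpt, hy0, hF0]
    rw [hz]; exact hc0
  intro j
  induction j with
  | zero => intro h _; exact absurd h (by omega)
  | succ j ih =>
    intro _ hjN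
    rcases Nat.eq_zero_or_pos j with hj | hj
    · subst hj; exact hc1
    · have ihj := ih hj (by omega)
      have hH := hH1 0 j (j+1) hj (Nat.lt_succ_self j) hjN
      rw [hc00, hFy0, sub_zero, sub_zero] at hH
      have hBpos : 0 < F (y j) := hFpos j hj (by omega)
      have hBB : F (y j) < F (y (j+1)) :=
        hFmono (hymem j (by omega)) (hymem (j+1) hjN)
          (y_strictmono_aux hyinc j (j+1) (Nat.lt_succ_self j) hjN)
      rw [div_lt_div_iff₀ hBpos (by linarith)] at hH
      nlinarith [hH, ihj, hBpos, hBB,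
        mul_lt_mul_of_pos_right ihj (show (0:ℝ) < F (y (j+1)) by linarith)]

/-- Auxiliary: at an optimal price schedule, any good `j ≠ 0` sold to a set of positive
measure is sold at a price at least its cost. Otherwise the monopolist could strictly
improve the profit by pricing all loss-making goods out of the market. -/
lemma sold_good_margin_aux (μ : Measure (ℝ × ℝ)) [IsFiniteMeasure μ]
    (N : ℕ) (y : ℕ → ℝ) (F : ℝ → ℝ) (c : ℝ × ℝ → ℝ) (v : ℕ → ℝ)
    (hy0 : y 0 = 0) (hF0 : F 0 = 0) (hc0 : c (0, 0) = 0)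
    (hopt : IsOptimal μ N y F c v)
    (j : ℕ) (hj0 : j ≠ 0) (hjN : j ≤ N) (hμj : 0 < μ (region N y F v j)) :
    c (zpt y F j) ≤ v j := by
  classical
  by_contra hcon
  push_neg at hcon
  set K : ℝ := 1 + ∑ k ∈ Finset.range (N + 1), (|y k| + |F (y k)| + |v k|) with hKdef
  have hKpos : 0 < K := by
    have h : (0:ℝ) ≤ ∑ k ∈ Finset.range (N + 1), (|y k| + |F (y k)| + |v k|) :=
      Finset.sum_nonneg fun k _ => by positivity
    linarith
  have hbound : ∀ k, k ≤ N → ∀ x : ℝ × ℝ, x ∈ Xsq →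
      dot x (zpt y F k) - v k < K := by
    intro k hk x hx
    obtain ⟨hx1, hx2⟩ := hx
    have h1 : x.1 * y k ≤ |y k| := by
      calc x.1 * y k ≤ |x.1 * y k| := le_abs_self _
        _ = x.1 * |y k| := by rw [abs_mul, abs_of_pos hx1.1]
        _ ≤ 1 * |y k| := mul_le_mul_of_nonneg_right hx1.2.le (abs_nonneg _)
        _ = |y k| := one_mul _
    have h2 : x.2 * F (y k) ≤ |F (y k)| := by
      calc x.2 * F (y k) ≤ |x.2 * F (y k)| := le_abs_self _
        _ = x.2 * |F (y k)| := by rw [abs_mul, abs_of_pos hx2.1]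
        _ ≤ 1 * |F (y k)| := mul_le_mul_of_nonneg_right hx2.2.le (abs_nonneg _)
        _ = |F (y k)| := one_mul _
    have h3 : |y k| + |F (y k)| + |v k|
        ≤ ∑ l ∈ Finset.range (N + 1), (|y l| + |F (y l)| + |v l|) :=
      Finset.single_le_sum (f := fun l => |y l| + |F (y l)| + |v l|)
        (fun l _ => by positivity) (Finset.mem_range.mpr (by omega))
    have h4 : -v k ≤ |v k| := neg_le_abs _
    simp only [dot, zpt]
    linarith
  set v' : ℕ → ℝ := fun k => if v k < c (zpt y F k) ∧ k ≠ 0 then v k + K else v k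
    with hv'def
  have hv'0 : v' 0 = 0 := by
    simp only [hv'def]
    rw [if_neg (by simp)]
    exact hopt.1
  have hv'ge : ∀ k, v k ≤ v' k := by
    intro k
    simp only [hv'def]
    split_ifs with h
    · linarith
    · exact le_rfl
  have hz0dot : ∀ w : ℝ × ℝ, dot w (zpt y F 0) = 0 := by
    intro w; simp [dot, zpt, hy0, hF0]
  have hc00 : c (zpt y F 0) = 0 := by
    have hz : zpt y F 0 = ((0:ℝ), (0:ℝ)) := by simp [zpt, hy0, hF0]
    rw [hz]; exact hc0
  have hgoodsub : ∀ k, ¬(v k < c (zpt y F k) ∧ k ≠ 0) →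
      region N y F v k ⊆ region N y F v' k := by
    intro k hk w hw
    refine ⟨hw.1, ?_⟩
    intro l hl hlk
    have h := hw.2 l hl hlk
    have hk' : v' k = v k := by simp only [hv'def]; rw [if_neg hk]
    have hl' : v l ≤ v' l := hv'ge l
    rw [hk']
    linarith
  have hbadempty : ∀ k, k ≤ N → (v k < c (zpt y F k) ∧ k ≠ 0) →
      region N y F v' k = ∅ := by
    intro k hkN hk
    rw [Set.eq_empty_iff_forall_notMem]
    intro w hw
    have h0 := hw.2 0 (Nat.zero_le N) (Ne.symm hk.2)
    have hk' : v' k = v k + K := by simp only [hv'def]; rw [if_pos hk]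
    rw [hz0dot, hv'0, hk'] at h0
    have hb := hbound k hkN w hw.1
    linarith
  set ε : ℝ := (c (zpt y F j) - v j) * (μ (region N y F v j)).toReal with hεdef
  have hεpos : 0 < ε := by
    apply mul_pos (by linarith)
    exact ENNReal.toReal_pos hμj.ne' (measure_ne_top μ _)
  have hterm : ∀ k ∈ Finset.range (N + 1),
      (v k - c (zpt y F k)) * (μ (region N y F v k)).toReal + (if k = j then ε else 0)
        ≤ (v' k - c (zpt y F k)) * (μ (region N y F v' k)).toReal := by
    intro k hk
    rw [Finset.mem_range] at hk
    by_cases hbad : v k < c (zpt y F k) ∧ k ≠ 0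
    · rw [hbadempty k (by omega) hbad]
      simp only [measure_empty, ENNReal.toReal_zero, mul_zero]
      by_cases hkj : k = j
      · subst hkj
        rw [if_pos rfl, hεdef]
        have : (v k - c (zpt y F k)) * (μ (region N y F v k)).toReal
            + (c (zpt y F k) - v k) * (μ (region N y F v k)).toReal = 0 := by ring
        linarith
      · rw [if_neg hkj, add_zero]
        exact mul_nonpos_of_nonpos_of_nonneg (by linarith [hbad.1]) ENNReal.toReal_nonneg
    · have hkj : k ≠ j := by
        intro h; subst h; exact hbad ⟨hcon, hj0⟩
      rw [if_neg hkj, add_zero]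
      have hvk : v' k = v k := by simp only [hv'def]; rw [if_neg hbad]
      rw [hvk]
      have hnn : 0 ≤ v k - c (zpt y F k) := by
        rcases not_and_or.mp hbad with h | h
        · linarith [not_lt.mp h]
        · have hk0 : k = 0 := not_not.mp h
          subst hk0
          rw [hopt.1, hc00]
          norm_num
      have hmono : (μ (region N y F v k)).toReal ≤ (μ (region N y F v' k)).toReal :=
        ENNReal.toReal_mono (measure_ne_top μ _) (measure_mono (hgoodsub k hbad))
      exact mul_le_mul_of_nonneg_left hmono hnn
  have hsum := Finset.sum_le_sum hterm
  rw [Finset.sum_add_distrib] at hsum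
  have hif : (∑ k ∈ Finset.range (N + 1), (if k = j then ε else 0)) = ε := by
    rw [Finset.sum_ite_eq' (Finset.range (N + 1)) j (fun _ => ε)]
    rw [if_pos (Finset.mem_range.mpr (by omega))]
  rw [hif] at hsum
  have hle := hopt.2 v' hv'0
  unfold profit at hle
  linarith

/-- Lemma `upper_segment`: for an optimal price schedule, the closure of each
indifference segment meets the upper-left part `({0}×[0,1]) ∪ ([0,1]×{1})` of the boundary
only along the top edge `[0,1]×{1}`. -/
theorem indifference_segments_meet_top_edge
    (ty α fsup f1sup f2sup : ℝ) (F : ℝ → ℝ) (c : ℝ × ℝ → ℝ)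
    (N : ℕ) (y : ℕ → ℝ) (f : ℝ × ℝ → ℝ) (μ : Measure (ℝ × ℝ))
    (hty : 0 < ty) (hα : 0 < α)
    (hF0 : F 0 = 0) (hFmono : StrictMonoOn F (Icc 0 ty)) (hFconv : ConvexOn ℝ (Icc 0 ty) F)
    (hy0 : y 0 = 0) (hyinc : ∀ i < N, y i < y (i+1)) (hyN : y N ≤ ty)
    (hc0 : c (0, 0) = 0)
    (hcmono : StrictMonoOn (fun s => c (s, F s)) (Icc 0 ty))
    (hcconv : ConvexOn ℝ (Icc 0 ty) (fun s => c (s, F s)))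
    (hμ : μ = (volume.restrict Xsq).withDensity fun x => ENNReal.ofReal (f x))
    (hprob : IsProbabilityMeasure μ)
    (hfl : ∀ x ∈ Xsq, α ≤ f x) (hfu : ∀ x ∈ Xsq, f x ≤ fsup)
    (hfd : ∀ x ∈ Xsq, DifferentiableAt ℝ f x)
    (hf1 : ∀ x ∈ Xsq, |fderiv ℝ f x (1, 0)| ≤ f1sup)
    (hf2 : ∀ x ∈ Xsq, |fderiv ℝ f x (0, 1)| ≤ f2sup)
    (hH1 : H1 N y F c) (hH2 : H2 N y F c α fsup f1sup) (hH3 : H3 N y F c α fsup f2sup)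
    (hc1 : F (y 1) < c (zpt y F 1))
    (v : ℕ → ℝ) (hopt : IsOptimal μ N y F c v) :
    ∀ i : ℕ, i + 1 ≤ N → 0 < μ (region N y F v i) → 0 < μ (region N y F v (i+1)) →
      (closure (region N y F v i) ∩ closure (region N y F v (i+1))) ∩
          ((({0} : Set ℝ) ×ˢ Icc (0:ℝ) 1) ∪ (Icc (0:ℝ) 1 ×ˢ ({1} : Set ℝ)))
        ⊆ Icc (0:ℝ) 1 ×ˢ ({1} : Set ℝ) := by
  intro i hiN hμi hμi1 x hx
  obtain ⟨hxcl, hxedge⟩ := hx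
  rcases hxedge with hleft | htop
  · exfalso
    obtain ⟨hx1, hx2⟩ := hleft
    rw [Set.mem_singleton_iff] at hx1
    haveI : IsProbabilityMeasure μ := hprob
    have hmargin : c (zpt y F (i+1)) ≤ v (i+1) :=
      sold_good_margin_aux μ N y F c v hy0 hF0 hc0 hopt (i+1) (by omega) hiN hμi1
    have hcF : F (y (i+1)) < c (zpt y F (i+1)) :=
      c_gt_F_aux hF0 hFmono hy0 hyinc hyN hc0 hH1 hc1 (i+1) (by omega) hiN
    have hsub : region N y F v (i+1) ⊆ {w : ℝ × ℝ | v (i+1) ≤ dot w (zpt y F (i+1))} := by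
      intro w hw
      have h0 := hw.2 0 (Nat.zero_le N) (by omega)
      have hz0 : dot w (zpt y F 0) = 0 := by simp [dot, zpt, hy0, hF0]
      rw [hz0, hopt.1] at h0
      simp only [Set.mem_setOf_eq]
      linarith
    have hclosed : IsClosed {w : ℝ × ℝ | v (i+1) ≤ dot w (zpt y F (i+1))} := by
      apply isClosed_le continuous_const
      exact (continuous_fst.mul continuous_const).add (continuous_snd.mul continuous_const)
    have hxC := closure_minimal hsub hclosed hxcl.2
    simp only [Set.mem_setOf_eq, dot, zpt] at hxC
    rw [hx1] at hxC
    have hFpos : 0 < F (y (i+1)) := by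
      have hy01 : y 0 < y (i+1) := y_strictmono_aux hyinc 0 (i+1) (by omega) hiN
      have hymem := y_mem_Icc_aux hy0 hyinc hyN
      have h := hFmono (hymem 0 (Nat.zero_le N)) (hymem (i+1) hiN) hy01
      rw [hy0, hF0] at h
      exact h
    have hx2F : x.2 * F (y (i+1)) ≤ F (y (i+1)) :=
      mul_le_of_le_one_left hFpos.le hx2.2
    linarith
  · exact htop
end
end

section
/- Let F(y) = A y² with 0 < A < 1/3, let c(z) = |z|²/2, let f ≡ 1 (so α = ‖f‖_∞ = 1 and ‖f_{x₁}‖_∞ = ‖f_{x₂}‖_∞ = 0), let N > 3, and let 0 = y_0 < y_1 < ⋯ < y_N be points such that the successive points z_i = (y_i, F(y_i)) on the curve are equally spaced with |z_{i+1} − z_i| = 1/N for each i. Then hypotheses (H1), (H2) and (H3) are satisfied. -/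
open MeasureTheory Set Filter
open scoped ENNReal

noncomputable section

lemma key_P6 (a b d e t : ℝ) (ha : 0 ≤ a)
    (hab : a < b) (hbd : b < d) (hba : b - a < t) (hdb : d - b < t)
    (hd1 : d < 1) (hbe : b + e < 1) (he : 0 < e) (het : e < t)
    (hb2 : 9*t^2 ≤ 13*b^2) (he2 : 9*t^2 ≤ 13*e^2) (ht : t ≤ 1/4) (ht0 : 0 < t) :
    (b+d)*(2*a+3*b+d) < 6*(a+b) := by
  have hb0 : 0 < b := lt_of_le_of_lt ha hab
  have hb45 : 4*t ≤ 5*b := by nlinarith [sq_nonneg (5*b - 4*t)]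
  have he82 : 41*t ≤ 50*e := by nlinarith [sq_nonneg (50*e - 41*t)]
  rcases le_or_gt b t with hbt | hbt
  · nlinarith [mul_nonneg (sub_nonneg.2 hbt) hb0.le, mul_pos ht0 (sub_pos.2 hab),
      mul_nonneg (mul_nonneg ht0.le ht0.le) (sub_nonneg.2 ht),
      mul_nonneg hb0.le (sub_nonneg.2 ht), mul_nonneg ha (by linarith : (0:ℝ) ≤ 3 - b - d)]
  · rcases le_or_gt (b + t) 1 with hb1 | hb1
    · nlinarith [mul_nonneg (by linarith : (0:ℝ) ≤ b - t) (by linarith : (0:ℝ) ≤ 1 - t - b),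
        mul_nonneg (by linarith : (0:ℝ) ≤ a - b + t) (by linarith : (0:ℝ) ≤ 3 - b - d),
        mul_nonneg (by linarith : (0:ℝ) ≤ b + t - d) (by linarith : (0:ℝ) ≤ 4*b + d),
        mul_nonneg ht0.le (by linarith : (0:ℝ) ≤ 1/4 - t)]
    · have h1 : 0 ≤ (1 - e - b) * (5*(b + 1 - e) - 6 - 2*t) := by
        apply mul_nonneg (by linarith)
        nlinarith [ht, ht0, hb1, het]
      have h2 : 0 < 4*e - 5*e^2 - 2*t - 2*t*e := by
        nlinarith [mul_nonneg (by linarith : (0:ℝ) ≤ 50*e - 41*t) (by linarith : (0:ℝ) ≤ t - e),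
          mul_nonneg (by linarith : (0:ℝ) ≤ 50*e - 41*t) (by linarith : (0:ℝ) ≤ 1/4 - t),
          mul_nonneg ht0.le (by linarith : (0:ℝ) ≤ 1/4 - t)]
      nlinarith [h1, h2, mul_nonneg (by linarith : (0:ℝ) ≤ a - b + t) (by linarith : (0:ℝ) ≤ 3 - b - d),
        mul_nonneg (by linarith : (0:ℝ) ≤ 1 - d) (by linarith : (0:ℝ) ≤ 2*(b-t) + 4*b + 1 + d)]

lemma quot_F (A u v : ℝ) (h : u < v) :
    (A * v ^ 2 - A * u ^ 2) / (v - u) = A * (u + v) := by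
  have h' : v - u ≠ 0 := sub_ne_zero.2 h.ne'
  field_simp
  ring

lemma quot_cy (A u v : ℝ) (h : u < v) :
    ((v ^ 2 + (A * v ^ 2) ^ 2) / 2 - (u ^ 2 + (A * u ^ 2) ^ 2) / 2) / (v - u)
      = (u + v) * (1 + A ^ 2 * (u ^ 2 + v ^ 2)) / 2 := by
  have h' : v - u ≠ 0 := sub_ne_zero.2 h.ne'
  field_simp
  ring

lemma quot_cF (A u v : ℝ) (hA : 0 < A) (hu : 0 ≤ u) (huv : u < v) :
    ((v ^ 2 + (A * v ^ 2) ^ 2) / 2 - (u ^ 2 + (A * u ^ 2) ^ 2) / 2) / (A * v ^ 2 - A * u ^ 2)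
      = (1 + A ^ 2 * (u ^ 2 + v ^ 2)) / (2 * A) := by
  have hv : 0 < v := lt_of_le_of_lt hu huv
  have h1 : A * v ^ 2 - A * u ^ 2 ≠ 0 := ne_of_gt (by nlinarith [mul_pos (sub_pos.2 huv) (show (0:ℝ) < u + v by linarith), hA])
  have h1' : v ^ 2 - u ^ 2 ≠ 0 := ne_of_gt (by nlinarith [mul_pos (sub_pos.2 huv) (show (0:ℝ) < u + v by linarith)])
  field_simp
  ring

lemma quot_yF (A u v : ℝ) (hA : 0 < A) (hu : 0 ≤ u) (huv : u < v) :
    (v - u) / (A * v ^ 2 - A * u ^ 2) = 1 / (A * (u + v)) := by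
  have hv : 0 < v := lt_of_le_of_lt hu huv
  have h1 : A * v ^ 2 - A * u ^ 2 ≠ 0 := ne_of_gt (by nlinarith [mul_pos (sub_pos.2 huv) (show (0:ℝ) < u + v by linarith), hA])
  have h1' : v ^ 2 - u ^ 2 ≠ 0 := ne_of_gt (by nlinarith [mul_pos (sub_pos.2 huv) (show (0:ℝ) < u + v by linarith)])
  have h2 : A * (u + v) ≠ 0 := ne_of_gt (by positivity)
  field_simp
  ring


set_option maxHeartbeats 2000000 in
/-- Example: with `F(y) = A y²` for `0 < A < 1/3`, quadratic cost
`c(z) = |z|²/2`, uniform density (`α = ‖f‖_∞ = 1`, `‖f_{x₁}‖_∞ = ‖f_{x₂}‖_∞ = 0`), `N > 3`,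
and grid points equally spaced along the curve with `|z_{i+1} − z_i| = 1/N`, hypotheses
(H1)–(H3) hold. -/
theorem example_satisfies_H1_H2_H3
    (A : ℝ) (hA0 : 0 < A) (hA : A < 1/3)
    (N : ℕ) (hN : 3 < N)
    (y : ℕ → ℝ) (hy0 : y 0 = 0) (hyinc : ∀ i < N, y i < y (i+1))
    (hsp : ∀ i < N,
      Real.sqrt ((y (i+1) - y i)^2 + (A * (y (i+1))^2 - A * (y i)^2)^2) = 1 / N) :
    H1 N y (fun s => A * s^2) (fun z => (z.1^2 + z.2^2) / 2) ∧
    H2 N y (fun s => A * s^2) (fun z => (z.1^2 + z.2^2) / 2) 1 1 0 ∧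
    H3 N y (fun s => A * s^2) (fun z => (z.1^2 + z.2^2) / 2) 1 1 0 := by
  have hNR : (0:ℝ) < N := by exact_mod_cast Nat.zero_lt_of_lt hN
  have hNR4 : (4:ℝ) ≤ N := by exact_mod_cast hN
  set t : ℝ := 1 / N with ht_def
  have ht0 : 0 < t := by positivity
  have htq : t ≤ 1/4 := by
    rw [ht_def, div_le_div_iff₀ hNR (by norm_num)]
    linarith
  have hmono : ∀ j, j ≤ N → ∀ i, i < j → y i < y j := by
    intro j
    induction j with
    | zero => intro _ i hi; omega
    | succ n ih =>
      intro hn i hi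
      have hyn : y n < y (n+1) := hyinc n (by omega)
      rcases Nat.lt_succ_iff_lt_or_eq.mp hi with h | h
      · exact (ih (by omega) i h).trans hyn
      · rw [h]; exact hyn
  have hmono' : ∀ i j, i ≤ j → j ≤ N → y i ≤ y j := by
    intro i j hij hj
    rcases eq_or_lt_of_le hij with h | h
    · rw [h]
    · exact (hmono j hj i h).le
  have hnn : ∀ i, i ≤ N → 0 ≤ y i := by
    intro i hi
    rw [← hy0]
    exact hmono' 0 i (by omega) hi
  have hsq : ∀ i, i < N → (y (i+1) - y i)^2 + (A*(y (i+1))^2 - A*(y i)^2)^2 = t^2 := by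
    intro i hi
    have h0 : 0 ≤ (y (i+1) - y i)^2 + (A*(y (i+1))^2 - A*(y i)^2)^2 := by positivity
    have h2 := Real.sq_sqrt h0
    rw [hsp i hi] at h2
    rw [← h2, ht_def]
  have hstep : ∀ i, i < N → y (i+1) - y i < t := by
    intro i hi
    have h := hsq i hi
    have hΔ : 0 < y (i+1) - y i := sub_pos.2 (hyinc i hi)
    have h1 : 0 ≤ y i := hnn i (by omega)
    have hF : 0 < A*(y (i+1))^2 - A*(y i)^2 := by
      have h2 : y i < y (i+1) := hyinc i hi
      nlinarith [mul_pos hΔ (show (0:ℝ) < y i + y (i+1) by linarith)]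
    nlinarith
  have hub : ∀ k, 1 ≤ k → k ≤ N → y k < k * t := by
    intro k hk1 hkN
    induction k with
    | zero => omega
    | succ n ih =>
      rcases Nat.eq_zero_or_pos n with h0 | h0
      · subst h0
        have h := hstep 0 (by omega)
        rw [hy0] at h
        push_cast
        linarith
      · have h1 := ih (by omega) (by omega)
        have h2 := hstep n (by omega)
        push_cast
        push_cast at h1
        linarith
  have hNt : (N:ℝ) * t = 1 := by
    rw [ht_def]
    field_simp
  have hyN1 : y N < 1 := by
    have := hub N (by omega) le_rfl
    rw [hNt] at this
    exact this
  have hylt1 : ∀ i, i ≤ N → y i < 1 := fun i hi =>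
    lt_of_le_of_lt (hmono' i N hi le_rfl) hyN1
  have hstep2 : ∀ i, i < N → 9*t^2 ≤ 13*(y (i+1) - y i)^2 := by
    intro i hi
    have h := hsq i hi
    have h1 : 0 ≤ y i := hnn i (by omega)
    have h2 : y i < y (i+1) := hyinc i hi
    have h3 : y (i+1) < 1 := hylt1 (i+1) (by omega)
    have hs2 : y i + y (i+1) < 2 := by linarith
    have hAs : 3*A*(y i + y (i+1)) < 2 := by
      nlinarith [mul_nonneg (show (0:ℝ) ≤ 1 - 3*A by linarith) (show (0:ℝ) ≤ y i + y (i+1) by linarith)]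
    nlinarith [mul_nonneg (mul_nonneg (show (0:ℝ) ≤ 2 - 3*A*(y i + y (i+1)) by linarith)
        (show (0:ℝ) ≤ 2 + 3*A*(y i + y (i+1)) by nlinarith [mul_nonneg hA0.le (show (0:ℝ) ≤ y i + y (i+1) by linarith)]))
      (sq_nonneg (y (i+1) - y i))]
  refine ⟨?_, ?_, ?_⟩
  · -- H1
    intro k i j hki hij hjN
    simp only [zpt]
    have hquot : ∀ p q : ℕ, q ≤ N → p < q →
        (((y q)^2 + (A * (y q)^2)^2)/2 - ((y p)^2 + (A * (y p)^2)^2)/2) /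
          (A * (y q)^2 - A * (y p)^2) = (1 + A^2*((y p)^2 + (y q)^2))/(2*A) := by
      intro p q hq hpq
      exact quot_cF A (y p) (y q) hA0 (hnn p (by omega)) (hmono q hq p hpq)
    rw [hquot k i (by omega) hki, hquot i j hjN hij]
    rw [div_lt_div_iff_of_pos_right (by positivity)]
    have hki' : y k < y i := hmono i (by omega) k hki
    have hij' : y i < y j := hmono j hjN i hij
    have hk0 : 0 ≤ y k := hnn k (by omega)
    nlinarith [mul_pos (pow_pos hA0 2) (show (0:ℝ) < (y j)^2 - (y k)^2 by nlinarith)]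
  · -- H2
    intro i hi0 hiN
    obtain ⟨j, rfl⟩ : ∃ j, i = j + 1 := ⟨i - 1, by omega⟩
    simp only [zpt, Nat.add_sub_cancel]
    set a := y j with ha_def
    set b := y (j+1) with hb_def
    set d := y (j+1+1) with hd_def
    have ha0 : 0 ≤ a := hnn j (by omega)
    have hab : a < b := hyinc j (by omega)
    have hbd : b < d := hyinc (j+1) hiN
    rw [quot_cy A b d hbd, quot_cy A a b hab, quot_F A b d hbd, quot_F A a b hab]
    have hden : 0 < A * (b + d) - A * (a + b) := by nlinarith [mul_pos hA0 (show (0:ℝ) < d - a by linarith)]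
    rw [div_lt_div_iff₀ (by norm_num) hden]
    have hcube : 0 ≤ (b+d)*(b^2+d^2) - (a+b)*(a^2+b^2) := by
      nlinarith [mul_nonneg (show (0:ℝ) ≤ d - a by linarith) (show (0:ℝ) ≤ d^2 + a*d + a^2 by nlinarith [mul_nonneg ha0 (show (0:ℝ) ≤ d by linarith), sq_nonneg a, sq_nonneg d]),
        mul_nonneg (mul_nonneg (show (0:ℝ) ≤ b by linarith) (show (0:ℝ) ≤ d - a by linarith)) (show (0:ℝ) ≤ d + a by linarith),
        mul_nonneg (sq_nonneg b) (show (0:ℝ) ≤ d - a by linarith)]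
    nlinarith [mul_pos (show (0:ℝ) < 1 - 3*A by linarith) (show (0:ℝ) < d - a by linarith),
      mul_nonneg (sq_nonneg A) hcube]
  · -- H3
    intro i hi0 hiN
    obtain ⟨j, rfl⟩ : ∃ j, i = j + 1 := ⟨i - 1, by omega⟩
    simp only [zpt, Nat.add_sub_cancel]
    set a := y j with ha_def
    set b := y (j+1) with hb_def
    set d := y (j+1+1) with hd_def
    have ha0 : 0 ≤ a := hnn j (by omega)
    have hab : a < b := hyinc j (by omega)
    have hbd : b < d := hyinc (j+1) hiN
    have hb0 : 0 < b := lt_of_le_of_lt ha0 hab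
    have hba : b - a < t := hstep j (by omega)
    have hdb : d - b < t := hstep (j+1) hiN
    have hd1 : d < 1 := hylt1 (j+1+1) (by omega)
    have hN1 : N - 1 + 1 = N := by omega
    set e : ℝ := y N - y (N-1) with he_def
    have he : 0 < e := by
      have h := hyinc (N-1) (by omega)
      rw [hN1] at h
      simp only [he_def]
      linarith
    have het : e < t := by
      have h := hstep (N-1) (by omega)
      rw [hN1] at h
      simpa [he_def] using h
    have he2 : 9*t^2 ≤ 13*e^2 := by
      have h := hstep2 (N-1) (by omega)
      rw [hN1] at h
      simpa [he_def] using h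
    have hbe : b + e < 1 := by
      have hble : b ≤ y (N-1) := hmono' (j+1) (N-1) (by omega) (by omega)
      simp only [he_def]
      linarith [hyN1]
    have hb2 : 9*t^2 ≤ 13*b^2 := by
      have h1 := hstep2 0 (by omega)
      rw [hy0] at h1
      have h2 : y 1 ≤ b := hmono' 1 (j+1) (by omega) (by omega)
      have h3 : 0 ≤ y 1 := hnn 1 (by omega)
      nlinarith
    -- rewrite quotients
    rw [quot_F A b d hbd, quot_F A a b hab, quot_cF A b d hA0 hb0.le hbd,
      quot_cF A a b hA0 ha0 hab, quot_yF A a b hA0 ha0 hab, quot_yF A b d hA0 hb0.le hbd]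
    simp only [one_mul, zero_mul, add_zero, mul_one]
    have hab0 : (0:ℝ) < a + b := by linarith
    have hbd0 : (0:ℝ) < b + d := by linarith
    have hr : A * (b + d) / (A * (a + b)) = (b + d) / (a + b) :=
      mul_div_mul_left _ _ hA0.ne'
    rw [hr]
    have hpre : 2 + (b + d) / (a + b) = (2*a + 3*b + d) / (a + b) := by
      field_simp
      ring
    rw [hpre]
    have hT : ((1 + A ^ 2 * (b ^ 2 + d ^ 2)) / (2 * A) - (1 + A ^ 2 * (a ^ 2 + b ^ 2)) / (2 * A)) /
        (1 / (A * (a + b)) - 1 / (A * (b + d))) = A^2 * (a + d) * (a + b) * (b + d) / 2 := by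
      have hd5 : 1 / (A * (a + b)) - 1 / (A * (b + d)) = (d - a) / (A * (a + b) * (b + d)) := by
        field_simp
        ring
      have hda : (0:ℝ) < d - a := by linarith
      have hAne : A ≠ 0 := hA0.ne'
      rw [hd5, div_eq_div_iff (ne_of_gt (div_pos hda (by positivity))) (by norm_num : (2:ℝ) ≠ 0)]
      field_simp
      ring
    rw [hT]
    rw [div_div_eq_mul_div]
    rw [div_mul_eq_mul_div, lt_div_iff₀ (by linarith : (0:ℝ) < 2*a + 3*b + d)]
    have hP6 : (b+d)*(2*a+3*b+d) < 6*(a+b) :=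
      key_P6 a b d e t ha0 hab hbd hba hdb hd1 hbe he het hb2 he2 htq ht0
    have hPpos : 0 < (b+d)*(2*a+3*b+d) := by nlinarith
    nlinarith [mul_pos (show (0:ℝ) < 1/3 - A by linarith) hPpos,
      mul_nonneg (mul_nonneg (mul_nonneg (sq_nonneg A) (show (0:ℝ) ≤ a + d by linarith)) (sq_nonneg (a+b))) hbd0.le]
end
end
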